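/- arXiv:1606.08335 — 2 statements merged into one kernel-verified Lean document; each statement's English description precedes it below -/
import Mathlib

section
/- For p > 0, the ellipse domains D_n = {(x,y) : (x-n)²/n² + y²/(2p(n-p)) < 1}, defined for integers n > p, form an increasing sequence (D_n ⊆ D_{n+1}) whose union is the parabolic domain D = {(x,y) : 4px > y²}. -/
open Real Set

lemma mem_iff_aux (p n x y : ℝ) (hp : 0 < p) (hn : p < n) :
    (x - n) ^ 2 / n ^ 2 + y ^ 2 / (2 * p * (n - p)) < 1 ↔
    2 * p * (n - p) * x ^ 2 + n ^ 2 * y ^ 2 < 4 * p * n * (n - p) * x := by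
  have h0 : (0:ℝ) < n := hp.trans hn
  have h1 : (0:ℝ) < n - p := sub_pos.mpr hn
  have hd : (0:ℝ) < n ^ 2 * (2 * p * (n - p)) := by positivity
  have key : (x - n) ^ 2 / n ^ 2 + y ^ 2 / (2 * p * (n - p)) - 1
      = (2 * p * (n - p) * x ^ 2 + n ^ 2 * y ^ 2 - 4 * p * n * (n - p) * x)
        / (n ^ 2 * (2 * p * (n - p))) := by
    field_simp
    ring
  rw [← sub_neg, key, div_lt_iff₀ hd, zero_mul, sub_neg]

/-- The ellipse domains D_n (for n > p) increase and their union is the parabolic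
domain {4px > y²}. -/
theorem ellipses_increase_to_parabola (p : ℝ) (hp : 0 < p)
    (D : ℕ → Set (ℝ × ℝ))
    (hD : ∀ n : ℕ, D n = {q : ℝ × ℝ |
      (q.1 - (n : ℝ)) ^ 2 / (n : ℝ) ^ 2 + q.2 ^ 2 / (2 * p * ((n : ℝ) - p)) < 1}) :
    (∀ n : ℕ, p < (n : ℝ) → D n ⊆ D (n + 1)) ∧
    (⋃ n ∈ {n : ℕ | p < (n : ℝ)}, D n) = {q : ℝ × ℝ | q.2 ^ 2 < 4 * p * q.1} := by
  constructor
  · intro n hn q hq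
    rw [hD] at hq ⊢
    simp only [mem_setOf_eq] at hq ⊢
    push_cast
    set x := q.1; set y := q.2
    rw [mem_iff_aux p n x y hp hn] at hq
    rw [mem_iff_aux p ((n:ℝ)+1) x y hp (hn.trans (by linarith))]
    have h0 : (0:ℝ) < n := hp.trans hn
    have h1 : (0:ℝ) < (n:ℝ) - p := sub_pos.mpr hn
    have hx : 0 < x := by
      nlinarith [mul_nonneg (mul_nonneg hp.le h1.le) (sq_nonneg x),
        mul_nonneg (sq_nonneg (n:ℝ)) (sq_nonneg y), mul_pos (mul_pos hp h0) h1]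
    have hm1 : (0:ℝ) < (n:ℝ)+1-p := by linarith
    have key2 : (n:ℝ)*((n:ℝ)-p)*(2*p*((n:ℝ)+1-p)*x^2 + ((n:ℝ)+1)^2*y^2 - 4*p*((n:ℝ)+1)*((n:ℝ)+1-p)*x)
        = ((n:ℝ)+1)*((n:ℝ)+1-p)*(2*p*((n:ℝ)-p)*x^2 + (n:ℝ)^2*y^2 - 4*p*(n:ℝ)*((n:ℝ)-p)*x)
          - 2*p*x^2*((n:ℝ)-p)*((n:ℝ)+1-p) - p*(n:ℝ)*((n:ℝ)+1)*y^2 := by ring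
    have hA : ((n:ℝ)+1)*((n:ℝ)+1-p)*(2*p*((n:ℝ)-p)*x^2 + (n:ℝ)^2*y^2 - 4*p*(n:ℝ)*((n:ℝ)-p)*x) < 0 :=
      mul_neg_of_pos_of_neg (by positivity) (by linarith)
    have hB : (n:ℝ)*((n:ℝ)-p)*(2*p*((n:ℝ)+1-p)*x^2 + ((n:ℝ)+1)^2*y^2 - 4*p*((n:ℝ)+1)*((n:ℝ)+1-p)*x) < 0 := by
      rw [key2]
      have t1 : 0 ≤ 2*p*x^2*((n:ℝ)-p)*((n:ℝ)+1-p) := by positivity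
      have t2 : 0 ≤ p*(n:ℝ)*((n:ℝ)+1)*y^2 := by positivity
      linarith
    nlinarith [mul_pos h0 h1]
  · ext q
    simp only [mem_iUnion, mem_setOf_eq, exists_prop]
    set x := q.1; set y := q.2
    constructor
    · rintro ⟨n, hn, hq⟩
      rw [hD] at hq
      simp only [mem_setOf_eq] at hq
      rw [mem_iff_aux p n x y hp hn] at hq
      have h0 : (0:ℝ) < n := hp.trans hn
      have h1 : (0:ℝ) < (n:ℝ) - p := sub_pos.mpr hn
      have hx : 0 < x := by
        nlinarith [mul_nonneg (mul_nonneg hp.le h1.le) (sq_nonneg x),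
          mul_nonneg (sq_nonneg (n:ℝ)) (sq_nonneg y), mul_pos (mul_pos hp h0) h1]
      nlinarith [mul_pos (mul_pos hp hx) (mul_pos hp h0),
        mul_nonneg (mul_nonneg hp.le h1.le) (sq_nonneg x)]
    · intro hy
      have hx : 0 < x := by nlinarith [sq_nonneg y]
      have he : 0 < 4 * p * x - y ^ 2 := by linarith
      obtain ⟨n, hn⟩ := exists_nat_gt (max p ((4*p^2*x + 2*p*x^2)/(4*p*x - y^2)))
      have hn1 : p < (n:ℝ) := (le_max_left _ _).trans_lt hn
      have hn2 : (4*p^2*x + 2*p*x^2)/(4*p*x - y^2) < (n:ℝ) := (le_max_right _ _).trans_lt hn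
      have h0 : (0:ℝ) < n := hp.trans hn1
      have h2n : 4*p^2*x + 2*p*x^2 < (n:ℝ) * (4*p*x - y^2) := by
        rw [div_lt_iff₀ he] at hn2; linarith
      refine ⟨n, hn1, ?_⟩
      rw [hD]
      simp only [mem_setOf_eq]
      rw [mem_iff_aux p n x y hp hn1]
      nlinarith [mul_lt_mul_of_pos_left h2n h0,
        mul_nonneg (mul_nonneg hp.le (sq_nonneg x)) hp.le]
end

section
/- If α ≥ π/2, then there is no function h on (-α/2, α/2) satisfying h'' + 4h = -1, h(±α/2) = 0, h(θ) = h(-θ), and h > 0 on (-α/2, α/2). Consequently the Saint-Venant problem on an angular sector of angle α ≥ π/2 has no solution of the form r²h(θ). -/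
open Real Set

lemma sector_key (a : ℝ) (ha : 0 < a) (h : ℝ → ℝ)
    (hC : ContDiffOn ℝ 2 h (Ioo (-a) a))
    (ode : ∀ θ ∈ Ioo (-a) a, deriv (deriv h) θ + 4 * h θ = -1)
    (heven : ∀ θ, h θ = h (-θ)) :
    ∀ θ ∈ Ioo (-a) a, h θ = (h 0 + 1/4) * cos (2*θ) - 1/4 := by
  set s : Set ℝ := Ioo (-a) a with hs
  have hso : IsOpen s := isOpen_Ioo
  have hsc : Convex ℝ s := convex_Ioo _ _
  have h0s : (0:ℝ) ∈ s := ⟨by linarith, ha⟩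
  have hd1 : ∀ θ ∈ s, HasDerivAt h (deriv h θ) θ := fun θ hθ =>
    (((hC.differentiableOn (by norm_num)).differentiableAt (hso.mem_nhds hθ))).hasDerivAt
  have hC1 : ContDiffOn ℝ 1 (deriv h) s := hC.deriv_of_isOpen hso (by norm_num)
  have hd2 : ∀ θ ∈ s, HasDerivAt (deriv h) (deriv (deriv h) θ) θ := fun θ hθ =>
    ((hC1.differentiableOn (by norm_num)).differentiableAt (hso.mem_nhds hθ)).hasDerivAt
  have hodd : deriv h 0 = 0 := by
    have e1 : deriv h 0 = deriv (fun θ => h (-θ)) 0 := by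
      congr 1; ext θ; exact heven θ
    rw [deriv_comp_neg, neg_zero] at e1
    linarith
  set A : ℝ → ℝ := fun θ => (h θ + 1/4) * cos (2*θ) - deriv h θ / 2 * sin (2*θ) with hA
  set B : ℝ → ℝ := fun θ => (h θ + 1/4) * sin (2*θ) + deriv h θ / 2 * cos (2*θ) with hB
  have hcos : ∀ θ : ℝ, HasDerivAt (fun t => cos (2*t)) (-2 * sin (2*θ)) θ := by
    intro θ
    have := (Real.hasDerivAt_cos (2*θ)).comp θ ((hasDerivAt_id θ).const_mul 2)
    simpa [Function.comp_def, mul_comm] using this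
  have hsin : ∀ θ : ℝ, HasDerivAt (fun t => sin (2*t)) (2 * cos (2*θ)) θ := by
    intro θ
    have := (Real.hasDerivAt_sin (2*θ)).comp θ ((hasDerivAt_id θ).const_mul 2)
    simpa [Function.comp_def, mul_comm] using this
  have hA' : ∀ θ ∈ s, HasDerivAt A 0 θ := by
    intro θ hθ
    have hode := ode θ hθ
    have H := (((hd1 θ hθ).add_const (1/4)).mul (hcos θ)).sub
      (((hd2 θ hθ).div_const 2).mul (hsin θ))
    refine H.congr_deriv ?_
    rw [show deriv (deriv h) θ = -1 - 4 * h θ by linarith]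
    ring
  have hB' : ∀ θ ∈ s, HasDerivAt B 0 θ := by
    intro θ hθ
    have hode := ode θ hθ
    have H := (((hd1 θ hθ).add_const (1/4)).mul (hsin θ)).add
      (((hd2 θ hθ).div_const 2).mul (hcos θ))
    refine H.congr_deriv ?_
    rw [show deriv (deriv h) θ = -1 - 4 * h θ by linarith]
    ring
  have const : ∀ (F : ℝ → ℝ), (∀ θ ∈ s, HasDerivAt F 0 θ) → ∀ θ ∈ s, F θ = F 0 := by
    intro F hF θ hθ
    refine hsc.is_const_of_fderivWithin_eq_zero (fun x hx => ((hF x hx).differentiableAt).differentiableWithinAt)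
      (fun x hx => ?_) hθ h0s
    rw [fderivWithin_of_isOpen hso hx, (hF x hx).hasFDerivAt.fderiv]
    ext; simp
  have hA0 : A 0 = h 0 + 1/4 := by simp [hA]
  have hB0 : B 0 = 0 := by simp [hB, hodd]
  intro θ hθ
  have e1 := const A hA' θ hθ
  have e2 := const B hB' θ hθ
  rw [hA0] at e1; rw [hB0] at e2
  have pyth := sin_sq_add_cos_sq (2*θ)
  have comb : A θ * cos (2*θ) + B θ * sin (2*θ) = h θ + 1/4 := by
    simp only [hA, hB]; linear_combination (h θ + 1/4) * pyth
  rw [e1, e2] at comb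
  linarith [comb]

lemma sector_no_ode (α : ℝ) (hα : π / 2 ≤ α) :
    ¬ ∃ h : ℝ → ℝ, ContDiffOn ℝ 2 h (Ioo (-(α / 2)) (α / 2)) ∧
      ContinuousOn h (Icc (-(α / 2)) (α / 2)) ∧
      (∀ θ ∈ Ioo (-(α / 2)) (α / 2), deriv (deriv h) θ + 4 * h θ = -1) ∧
      h (α / 2) = 0 ∧ h (-(α / 2)) = 0 ∧
      (∀ θ, h θ = h (-θ)) ∧
      (∀ θ ∈ Ioo (-(α / 2)) (α / 2), 0 < h θ) := by
  rintro ⟨h, hC, hcont, ode, hb1, hb2, heven, hpos⟩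
  have hπ : 0 < π := Real.pi_pos
  have ha : 0 < α / 2 := by linarith
  have hq : π / 4 ≤ α / 2 := by linarith
  have key := sector_key (α/2) ha h hC ode heven
  have hcosq : Real.cos (2 * (π/4)) = 0 := by
    rw [show 2 * (π/4) = π/2 by ring, Real.cos_pi_div_two]
  rcases lt_or_eq_of_le hq with hlt | heq
  · have hmem : π/4 ∈ Ioo (-(α/2)) (α/2) := ⟨by linarith, hlt⟩
    have := key (π/4) hmem
    rw [hcosq] at this
    have := hpos (π/4) hmem
    linarith
  · -- α/2 = π/4 : boundary case, use continuity
    have hclo : α/2 ∈ closure (Ioo (-(α/2)) (α/2)) := by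
      rw [closure_Ioo (by linarith : -(α/2) ≠ α/2)]
      exact ⟨by linarith, le_refl _⟩
    have hne : (nhdsWithin (α/2) (Ioo (-(α/2)) (α/2))).NeBot :=
      mem_closure_iff_nhdsWithin_neBot.mp hclo
    have t1 : Filter.Tendsto h (nhdsWithin (α/2) (Ioo (-(α/2)) (α/2))) (nhds (h (α/2))) :=
      ((hcont (α/2) ⟨by linarith, le_refl _⟩).mono Ioo_subset_Icc_self)
    set g : ℝ → ℝ := fun θ => (h 0 + 1/4) * cos (2*θ) - 1/4 with hg
    have t2 : Filter.Tendsto h (nhdsWithin (α/2) (Ioo (-(α/2)) (α/2))) (nhds (g (α/2))) := by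
      have hgc : Filter.Tendsto g (nhdsWithin (α/2) (Ioo (-(α/2)) (α/2))) (nhds (g (α/2))) :=
        ((Continuous.continuousAt (by fun_prop)).continuousWithinAt)
      refine hgc.congr' ?_
      filter_upwards [self_mem_nhdsWithin] with x hx
      exact (key x hx).symm
    have hend : h (α/2) = g (α/2) := tendsto_nhds_unique t1 t2
    have : g (α/2) = -(1/4) := by
      rw [hg]; simp only []
      rw [← heq, hcosq]; ring
    have h0pos := hpos 0 ⟨by linarith, ha⟩
    rw [hb1, this] at hend
    linarith

lemma deriv_sq_mul (c : ℝ) : deriv (fun r' : ℝ => r' ^ 2 * c) = fun r' => 2 * r' * c := by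
  funext x
  have := ((hasDerivAt_pow 2 x).mul_const c).deriv
  simpa using this


open Real Set

/-- If α ≥ π/2, there is no positive symmetric solution of h'' + 4h = -1 on
(-α/2, α/2) vanishing at ±α/2; consequently the Saint-Venant problem on the sector
of angle α has no solution of the form r² h(θ). -/
theorem sector_no_solution_of_large_angle (α : ℝ) (hα : π / 2 ≤ α) :
    (¬ ∃ h : ℝ → ℝ, ContDiffOn ℝ 2 h (Ioo (-(α / 2)) (α / 2)) ∧
      ContinuousOn h (Icc (-(α / 2)) (α / 2)) ∧
      (∀ θ ∈ Ioo (-(α / 2)) (α / 2), deriv (deriv h) θ + 4 * h θ = -1) ∧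
      h (α / 2) = 0 ∧ h (-(α / 2)) = 0 ∧
      (∀ θ, h θ = h (-θ)) ∧
      (∀ θ ∈ Ioo (-(α / 2)) (α / 2), 0 < h θ)) ∧
    (¬ ∃ h : ℝ → ℝ, ContDiffOn ℝ 2 h (Ioo (-(α / 2)) (α / 2)) ∧
      ContinuousOn h (Icc (-(α / 2)) (α / 2)) ∧
      (∀ r θ, 0 < r → θ ∈ Ioo (-(α / 2)) (α / 2) →
        deriv (deriv (fun r' : ℝ => r' ^ 2 * h θ)) r +
          (1 / r) * deriv (fun r' : ℝ => r' ^ 2 * h θ) r +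
          (1 / r ^ 2) * deriv (deriv (fun θ' : ℝ => r ^ 2 * h θ')) θ = -1) ∧
      (∀ r : ℝ, 0 < r → r ^ 2 * h (α / 2) = 0 ∧ r ^ 2 * h (-(α / 2)) = 0) ∧
      (∀ θ, h θ = h (-θ)) ∧
      (∀ r θ, 0 < r → θ ∈ Ioo (-(α / 2)) (α / 2) → 0 < r ^ 2 * h θ)) := by
  constructor
  · exact sector_no_ode α hα
  · rintro ⟨h, hC, hcont, pde, hb, heven, hpos⟩
    refine sector_no_ode α hα ⟨h, hC, hcont, ?_, ?_, ?_, heven, ?_⟩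
    · intro θ hθ
      have e := pde 1 θ one_pos hθ
      rw [deriv_sq_mul (h θ)] at e
      have e2 : deriv (fun r' : ℝ => 2 * r' * h θ) 1 = 2 * h θ := by
        have := (((hasDerivAt_id (1:ℝ)).const_mul 2).mul_const (h θ)).deriv
        simpa using this
      rw [e2] at e
      simp only [one_pow, one_mul, one_div, inv_one, mul_one] at e
      linarith
    · have := (hb 1 one_pos).1; simpa using this
    · have := (hb 1 one_pos).2; simpa using this
    · intro θ hθ
      have := hpos 1 θ one_pos hθ; simpa using this
end
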